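/- For all natural numbers n and s and all complex numbers x and z, the sum over k from 0 to n of binom(k+s, k)·C(x−k, n−k)·z^k equals the sum over k from 0 to n of binom(k+s, k)·C(x+s+1, n−k)·(z−1)^k, where binom(k+s,k) denotes the ordinary binomial coefficient of natural numbers. -/

import Mathlib

open Finset

/-- The generalized binomial coefficient `C(x, k) = x(x-1)⋯(x-k+1)/k!` for `x : ℂ`. -/
noncomputable def genBinom (x : ℂ) (k : ℕ) : ℂ := (∏ i ∈ Finset.range k, (x - i)) / (Nat.factorial k)

lemma descPoch_smeval (x : ℂ) (k : ℕ) :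
    (descPochhammer ℤ k).smeval x = ∏ i ∈ Finset.range k, (x - i) := by
  induction k with
  | zero => simp [descPochhammer_zero, Polynomial.smeval_one]
  | succ n ih =>
    rw [descPochhammer_succ_right, Polynomial.smeval_mul, ih, prod_range_succ,
      Polynomial.smeval_sub, Polynomial.smeval_X]
    simp [Polynomial.smeval_natCast]

lemma genBinom_eq_choose (x : ℂ) (k : ℕ) : genBinom x k = Ring.choose x k := by
  have h := Ring.descPochhammer_eq_factorial_smul_choose x k
  rw [descPoch_smeval] at h
  rw [genBinom, h, nsmul_eq_mul]
  exact mul_div_cancel_left₀ _ (by exact_mod_cast Nat.factorial_ne_zero k)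

lemma vand (u v : ℂ) (N : ℕ) :
    genBinom (u + v) N = ∑ m ∈ Finset.range (N + 1), genBinom u m * genBinom v (N - m) := by
  simp only [genBinom_eq_choose]
  rw [Ring.add_choose_eq N (Commute.all u v), Finset.Nat.sum_antidiagonal_eq_sum_range_succ_mk]

lemma genBinom_neg (a m : ℕ) :
    genBinom (-(a:ℂ) - 1) m = (-1) ^ m * ((m + a).choose m : ℂ) := by
  induction m with
  | zero => simp [genBinom]
  | succ n ih =>
    have h1 : genBinom (-(a:ℂ) - 1) (n+1)
        = genBinom (-(a:ℂ) - 1) n * ((-(a:ℂ) - 1 - n) / (n+1)) := by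
      rw [genBinom, genBinom, prod_range_succ, Nat.factorial_succ]
      push_cast
      field_simp
    rw [h1, ih]
    have h2 : ((n + 1 + a).choose (n+1) : ℂ) * (n+1) = ((n + a).choose n : ℂ) * (a + 1 + n) := by
      have := Nat.add_one_mul_choose_eq (n + a) n
      have h3 : (n + a + 1).choose (n + 1) * (n + 1) = (n + a + 1) * (n + a).choose n := this.symm
      have h4 : n + 1 + a = n + a + 1 := by ring
      rw [h4]
      exact_mod_cast by push_cast [h3]; ring
    have hne : ((n:ℂ)+1) ≠ 0 := Nat.cast_add_one_ne_zero n
    field_simp at h2 ⊢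
    rw [pow_succ]
    ring_nf
    ring_nf at h2
    linear_combination (-1:ℂ)^n * h2

lemma nat_id (m t s : ℕ) :
    (m + t + s).choose (m + t) * ((m + t).choose m)
      = (m + s).choose m * ((m + t + s).choose t) := by
  have h1 : (m + t).choose m = (m + t).choose t := Nat.choose_symm_add
  rw [h1, Nat.choose_mul (by omega)]
  have h2 : m + t + s - t = m + s := by omega
  have h3 : m + t - t = m := by omega
  rw [h2, h3, mul_comm]

lemma ksInnerSum (n s m : ℕ) (x : ℂ) (hm : m ≤ n) :
    ∑ t ∈ Finset.range (n + 1 - m),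
        ((m + t + s).choose (m + t) : ℂ) * ((m + t).choose m) * (-1) ^ t
          * genBinom (x + s + 1) (n - (m + t))
      = ((m + s).choose m : ℂ) * genBinom (x - m) (n - m) := by
  have key : x - (m : ℂ) = (-((m + s : ℕ) : ℂ) - 1) + (x + s + 1) := by push_cast; ring
  rw [key, vand, mul_sum]
  have hrange : n + 1 - m = (n - m) + 1 := by omega
  rw [hrange]
  refine Finset.sum_congr rfl fun t ht => ?_
  rw [Finset.mem_range] at ht
  rw [genBinom_neg]
  have h1 : n - (m + t) = n - m - t := by omega
  have h2 : t + (m + s) = m + t + s := by omega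
  rw [h1, h2]
  have h3 := nat_id m t s
  have h3c : ((m + t + s).choose (m + t) : ℂ) * ((m + t).choose m)
      = ((m + s).choose m : ℂ) * ((m + t + s).choose t) := by exact_mod_cast h3
  linear_combination (-1:ℂ)^t * genBinom (x + s + 1) (n - m - t) * h3c

theorem ks_identity (n s : ℕ) (x z : ℂ) :
    ∑ k ∈ Finset.range (n + 1), ((k + s).choose k : ℂ) * genBinom (x - k) (n - k) * z ^ k =
      ∑ k ∈ Finset.range (n + 1),
        ((k + s).choose k : ℂ) * genBinom (x + s + 1) (n - k) * (z - 1) ^ k := by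
  symm
  calc
    ∑ k ∈ Finset.range (n + 1),
        ((k + s).choose k : ℂ) * genBinom (x + s + 1) (n - k) * (z - 1) ^ k
      = ∑ k ∈ Finset.range (n + 1), ∑ m ∈ Finset.range (k + 1),
          ((k + s).choose k : ℂ) * genBinom (x + s + 1) (n - k)
            * ((-1) ^ (m + k) * z ^ m * (k.choose m)) := by
        refine Finset.sum_congr rfl fun k _ => ?_
        rw [sub_pow, Finset.mul_sum]
        simp [one_pow]
    _ = ∑ m ∈ Finset.range (n + 1), ∑ k ∈ Finset.Ico m (n + 1),
          ((k + s).choose k : ℂ) * genBinom (x + s + 1) (n - k)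
            * ((-1) ^ (m + k) * z ^ m * (k.choose m)) := by
        simp_rw [Finset.range_eq_Ico]
        rw [← Finset.sum_Ico_Ico_comm]
    _ = ∑ m ∈ Finset.range (n + 1),
          ((m + s).choose m : ℂ) * genBinom (x - m) (n - m) * z ^ m := by
        refine Finset.sum_congr rfl fun m hm => ?_
        rw [Finset.mem_range, Nat.lt_succ_iff] at hm
        rw [Finset.sum_Ico_eq_sum_range]
        have := ksInnerSum n s m x hm
        calc
          ∑ t ∈ Finset.range (n + 1 - m),
              (((m + t) + s).choose (m + t) : ℂ) * genBinom (x + s + 1) (n - (m + t))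
                * ((-1) ^ (m + (m + t)) * z ^ m * ((m + t).choose m))
            = (∑ t ∈ Finset.range (n + 1 - m),
                ((m + t + s).choose (m + t) : ℂ) * ((m + t).choose m) * (-1) ^ t
                  * genBinom (x + s + 1) (n - (m + t))) * z ^ m := by
              rw [Finset.sum_mul]
              refine Finset.sum_congr rfl fun t _ => ?_
              have hpow : ((-1 : ℂ)) ^ (m + (m + t)) = (-1) ^ t := by
                rw [show m + (m + t) = 2 * m + t by omega, pow_add, pow_mul]
                simp
              rw [hpow]
              ring
          _ = ((m + s).choose m : ℂ) * genBinom (x - m) (n - m) * z ^ m := by rw [this]
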